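/- Let E = (C₂)^n with n ≥ 2, k = F₂, and let Ω²F₂ ⊆ P = (F₂E)^n be the kernel of ψ(aᵢ) = ρᵢ = σᵢ − 1. Let a = ρₙρ_{n−1}⋯ρ₂·a₁ ∈ P, and M = Ω²F₂ + F₂·a. Then: (i) a ∉ Ω²F₂, so M is an F₂E-submodule of P strictly containing Ω²F₂ with dim M = dim Ω²F₂ + 1; (ii) the map η : M → F₂ with η(Ω²F₂) = 0 and η(a) = 1 is a well-defined surjective F₂E-homomorphism; (iii) the short exact sequence 0 → Ω²F₂ → M →^η F₂ → 0 does not split. -/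

import Mathlib

/-- The elementary abelian `2`-group of rank `n`. -/
abbrev Egrp (n : ℕ) : Type := Multiplicative (Fin n → ZMod 2)

/-- The group algebra `F₂E`. -/
abbrev F2E (n : ℕ) : Type := MonoidAlgebra (ZMod 2) (Egrp n)

/-- The generator `σᵢ` of `E` inside the group algebra. -/
noncomputable abbrev sigmaE (n : ℕ) (i : Fin n) : F2E n :=
  MonoidAlgebra.of (ZMod 2) (Egrp n) (Multiplicative.ofAdd (Pi.single i 1))

/-- `ρᵢ = σᵢ - 1`. -/
noncomputable abbrev rhoE (n : ℕ) (i : Fin n) : F2E n := sigmaE n i - 1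

/-- The augmentation map `F₂E → F₂`, sending every group element to `1`. -/
noncomputable abbrev augE (n : ℕ) : F2E n →ₐ[ZMod 2] ZMod 2 :=
  MonoidAlgebra.lift (ZMod 2) (ZMod 2) (Egrp n) 1

/-- `F₂` with the trivial `F₂E`-action (via the augmentation). -/
def TrivF2 (n : ℕ) : Type := ZMod 2

instance (n : ℕ) : AddCommGroup (TrivF2 n) := inferInstanceAs (AddCommGroup (ZMod 2))
instance (n : ℕ) : One (TrivF2 n) := inferInstanceAs (One (ZMod 2))
instance (n : ℕ) : Zero (TrivF2 n) := inferInstanceAs (Zero (ZMod 2))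
noncomputable instance (n : ℕ) : Module (F2E n) (TrivF2 n) :=
  Module.compHom (ZMod 2) ((augE n).toRingHom)

/-- The element `a = ρₙ ρ_{n-1} ⋯ ρ₂ a₁` of `P = (F₂E)ⁿ`. -/
noncomputable def aElt (n : ℕ) (hn : 2 ≤ n) : Fin n → F2E n :=
  (∏ i ∈ Finset.univ.erase (⟨0, by omega⟩ : Fin n), rhoE n i) •
    (Pi.single (⟨0, by omega⟩ : Fin n) 1 : Fin n → F2E n)


noncomputable instance (n : ℕ) : Module.Finite (ZMod 2) (F2E n) :=
  Module.Finite.of_basis (MonoidAlgebra.basis (Egrp n) (ZMod 2))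

lemma two_eq_zero' (n : ℕ) : (1 : F2E n) + 1 = 0 := by
  rw [MonoidAlgebra.one_def, ← MonoidAlgebra.single_add,
    (by decide : (1 : ZMod 2) + 1 = 0), MonoidAlgebra.single_zero]

lemma neg_one_eq' (n : ℕ) : (-1 : F2E n) = 1 := by
  rw [neg_eq_iff_add_eq_zero]; exact two_eq_zero' n

lemma rho_eq_add (n : ℕ) (i : Fin n) : rhoE n i = sigmaE n i + 1 := by
  rw [rhoE, sub_eq_add_neg, neg_one_eq']

lemma sigma_sq (n : ℕ) (i : Fin n) : sigmaE n i * sigmaE n i = 1 := by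
  rw [sigmaE, ← map_mul, ← ofAdd_add, ← Pi.single_add,
    (by decide : (1 : ZMod 2) + 1 = 0), Pi.single_zero, ofAdd_zero, map_one]

/-- `g` attached to a subset. -/
noncomputable def gsetE (n : ℕ) (t : Finset (Fin n)) : Egrp n :=
  Multiplicative.ofAdd (∑ i ∈ t, Pi.single i 1)

lemma gsetE_apply (n : ℕ) (t : Finset (Fin n)) (j : Fin n) :
    (Multiplicative.toAdd (gsetE n t)) j = if j ∈ t then 1 else 0 := by
  simp only [gsetE, toAdd_ofAdd, Finset.sum_apply, Pi.single_apply]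
  simp [Finset.sum_ite_eq']

lemma gsetE_inj (n : ℕ) : Function.Injective (gsetE n) := by
  intro t t' h
  ext j
  have h2 : (Multiplicative.toAdd (gsetE n t)) j = (Multiplicative.toAdd (gsetE n t')) j := by
    rw [h]
  rw [gsetE_apply, gsetE_apply] at h2
  by_cases h3 : j ∈ t <;> by_cases h4 : j ∈ t' <;> simp_all

lemma expandE (n : ℕ) (s : Finset (Fin n)) :
    ∏ i ∈ s, rhoE n i = ∑ t ∈ s.powerset, MonoidAlgebra.single (gsetE n t) (1 : ZMod 2) := by
  classical
  induction s using Finset.induction_on with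
  | empty => simp [gsetE, MonoidAlgebra.one_def]
  | @insert a s ha ih =>
    rw [Finset.prod_insert ha, ih, rho_eq_add, add_mul, one_mul, add_comm, Finset.mul_sum,
      Finset.powerset_insert, Finset.sum_union, Finset.sum_image]
    · congr 1
      apply Finset.sum_congr rfl
      intro t ht
      rw [Finset.mem_powerset] at ht
      have hat : a ∉ t := fun h => ha (ht h)
      rw [sigmaE, MonoidAlgebra.of_apply, MonoidAlgebra.single_mul_single, one_mul]
      congr 1
      simp only [gsetE]
      rw [← ofAdd_add, Finset.sum_insert hat]
    · intro t ht u hu h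
      have ht' := Finset.mem_powerset.mp ht
      have hu' := Finset.mem_powerset.mp hu
      have e : ∀ v : Finset (Fin n), v ⊆ s → (insert a v).erase a = v := fun v hv =>
        Finset.erase_insert (fun h => ha (hv h))
      rw [← e t ht', ← e u hu', h]
    · rw [Finset.disjoint_left]
      intro t ht ht'
      rw [Finset.mem_powerset] at ht
      rcases Finset.mem_image.mp ht' with ⟨u, _, rfl⟩
      exact ha (ht (Finset.mem_insert_self a u))

noncomputable def piRho (n : ℕ) : F2E n := ∏ i, rhoE n i

lemma gsetE_empty (n : ℕ) : gsetE n ∅ = 1 := by simp [gsetE]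

lemma piRho_apply_one (n : ℕ) : (piRho n).coeff 1 = 1 := by
  classical
  rw [piRho, expandE, MonoidAlgebra.coeff_sum, Finset.sum_apply']
  have : ∀ t ∈ (Finset.univ : Finset (Fin n)).powerset,
      (MonoidAlgebra.single (gsetE n t) (1 : ZMod 2)).coeff 1 = if t = ∅ then 1 else 0 := by
    intro t _
    rw [MonoidAlgebra.coeff_single, Finsupp.single_apply]
    congr 1
    simp only [eq_iff_iff]
    constructor
    · intro h; exact gsetE_inj n (by rw [h, gsetE_empty])
    · intro h; rw [h, gsetE_empty]
  rw [Finset.sum_congr rfl this, Finset.sum_ite_eq']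
  simp

lemma sigma_mul_rho (n : ℕ) (i : Fin n) : sigmaE n i * rhoE n i = rhoE n i := by
  rw [rho_eq_add, mul_add, mul_one, sigma_sq, add_comm]

lemma sigma_mul_pi (n : ℕ) (i : Fin n) : sigmaE n i * piRho n = piRho n := by
  rw [piRho, ← Finset.mul_prod_erase Finset.univ _ (Finset.mem_univ i), ← mul_assoc,
    sigma_mul_rho, Finset.mul_prod_erase Finset.univ _ (Finset.mem_univ i)]

/-- if `x` is fixed by all `σᵢ` then it is fixed by every group element. -/
lemma of_mul_fixed (n : ℕ) (x : F2E n) (hx : ∀ i, sigmaE n i * x = x) (g : Egrp n) :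
    MonoidAlgebra.of (ZMod 2) (Egrp n) g * x = x := by
  classical
  have hg : g = Multiplicative.ofAdd (∑ i, Pi.single i ((Multiplicative.toAdd g) i)) := by
    rw [Finset.univ_sum_single]
    rfl
  rw [hg, ofAdd_sum, map_prod]
  refine Finset.prod_induction _ (fun y => y * x = x) ?_ (by show (1 : F2E n) * x = x; rw [one_mul]) ?_
  · intro a b h1 h2; rw [mul_assoc, h2, h1]
  · intro i _
    rcases (by decide : ∀ c : ZMod 2, c = 0 ∨ c = 1) ((Multiplicative.toAdd g) i) with h | h
    · rw [h, Pi.single_zero, ofAdd_zero, map_one, one_mul]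
    · rw [h]; exact hx i

lemma fixed_const (n : ℕ) (x : F2E n) (hx : ∀ i, sigmaE n i * x = x) (g : Egrp n) :
    x.coeff g = x.coeff 1 := by
  have h := of_mul_fixed n x hx g⁻¹
  calc x.coeff g = (MonoidAlgebra.of (ZMod 2) (Egrp n) g⁻¹ * x).coeff 1 := by
        rw [MonoidAlgebra.of_apply, MonoidAlgebra.coeff_single_mul_apply, one_mul, inv_inv, mul_one]
    _ = x.coeff 1 := by rw [h]

lemma piRho_apply (n : ℕ) (g : Egrp n) : (piRho n).coeff g = 1 := by
  rw [fixed_const n _ (sigma_mul_pi n) g, piRho_apply_one]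

lemma piRho_ne_zero (n : ℕ) : piRho n ≠ 0 := by
  intro h
  have := piRho_apply_one n
  rw [h] at this
  simp at this

lemma aug_of (n : ℕ) (g : Egrp n) : augE n (MonoidAlgebra.of (ZMod 2) (Egrp n) g) = 1 := by
  rw [augE, MonoidAlgebra.lift_of]; rfl

lemma aug_rho (n : ℕ) (i : Fin n) : augE n (rhoE n i) = 0 := by
  rw [rhoE, map_sub, map_one, sigmaE, aug_of, sub_self]

/-- Key: `r · Π = aug(r) · Π`. -/
lemma mul_piRho (n : ℕ) (r : F2E n) : r * piRho n = augE n r • piRho n := by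
  induction r using MonoidAlgebra.induction_on with
  | of g => rw [of_mul_fixed n _ (sigma_mul_pi n) g, aug_of, one_smul]
  | add f g hf hg => rw [add_mul, hf, hg, map_add, add_smul]
  | smul c f hf => rw [smul_mul_assoc, hf, map_smul, smul_assoc]

lemma rho_mul_piRho (n : ℕ) (i : Fin n) : rhoE n i * piRho n = 0 := by
  rw [mul_piRho, aug_rho, zero_smul]

/-- socle lemma -/
lemma socle (n : ℕ) (x : F2E n) (hx : ∀ i, rhoE n i * x = 0) : x = x.coeff 1 • piRho n := by
  have hfix : ∀ i, sigmaE n i * x = x := by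
    intro i
    have h := hx i
    rw [rho_eq_add, add_mul, one_mul] at h
    have this2 := congrArg (fun y => y + x) h
    simp only [zero_add, add_assoc] at this2
    have hxx : x + x = 0 := by
      rw [← two_smul (ZMod 2) x, (by decide : (2 : ZMod 2) = 0), zero_smul]
    rw [hxx, add_zero] at this2
    exact this2
  ext g
  rw [MonoidAlgebra.coeff_smul_apply, piRho_apply, smul_eq_mul, mul_one, fixed_const n x hfix g]


lemma pi_decomp (n : ℕ) (x : Fin n → F2E n) :
    x = ∑ j, x j • (Pi.single j 1 : Fin n → F2E n) := by
  have h : ∀ j, x j • (Pi.single j 1 : Fin n → F2E n) = Pi.single j (x j) := by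
    intro j
    ext k
    by_cases hjk : j = k
    · subst hjk; simp
    · simp [Pi.single_eq_of_ne (Ne.symm hjk)]
  rw [Finset.sum_congr rfl fun j _ => h j, Finset.univ_sum_single]


set_option maxHeartbeats 2000000 in
set_option synthInstance.maxHeartbeats 200000 in
/-- With `Ω²F₂ = ker ψ ⊆ P = (F₂E)ⁿ` and `a = ρₙ⋯ρ₂a₁`, set `M = Ω²F₂ + F₂·a`.
Then (i) `a ∉ Ω²F₂` and `dim M = dim Ω²F₂ + 1`; (ii) there is a surjective
`F₂E`-homomorphism `η : M → F₂` (trivial action) killing `Ω²F₂` and with `η(a) = 1`;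
(iii) the resulting short exact sequence `0 → Ω²F₂ → M → F₂ → 0` does not split. -/
theorem stmt_16 (n : ℕ) (hn : 2 ≤ n) (ψ : (Fin n → F2E n) →ₗ[F2E n] F2E n)
    (hψ : ∀ i : Fin n, ψ (Pi.single i 1) = rhoE n i) :
    aElt n hn ∉ LinearMap.ker ψ ∧
    Module.finrank (ZMod 2)
        (LinearMap.ker ψ ⊔ Submodule.span (F2E n) {aElt n hn} : Submodule (F2E n) _) =
      Module.finrank (ZMod 2) (LinearMap.ker ψ) + 1 ∧
    ∃ η : (LinearMap.ker ψ ⊔ Submodule.span (F2E n) {aElt n hn} :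
        Submodule (F2E n) (Fin n → F2E n)) →ₗ[F2E n] TrivF2 n,
      (∀ x : (LinearMap.ker ψ ⊔ Submodule.span (F2E n) {aElt n hn} :
          Submodule (F2E n) (Fin n → F2E n)), (x : Fin n → F2E n) ∈ LinearMap.ker ψ →
        η x = 0) ∧
      η ⟨aElt n hn, Submodule.mem_sup_right (Submodule.mem_span_singleton_self _)⟩ = 1 ∧
      Function.Surjective η ∧
      ¬ ∃ s : TrivF2 n →ₗ[F2E n]
          (LinearMap.ker ψ ⊔ Submodule.span (F2E n) {aElt n hn} :
            Submodule (F2E n) (Fin n → F2E n)),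
          η ∘ₗ s = LinearMap.id := by
  classical
  have psi_a : ψ (aElt n hn) = piRho n := by
    rw [aElt, map_smul, hψ, smul_eq_mul,
      Finset.prod_erase_mul Finset.univ _ (Finset.mem_univ _), piRho]
  have haK : aElt n hn ∉ LinearMap.ker ψ := by
    intro h
    rw [LinearMap.mem_ker, psi_a] at h
    exact piRho_ne_zero n h
  have ha0 : aElt n hn ≠ 0 := by
    intro h
    exact haK (by rw [LinearMap.mem_ker, h, map_zero])
  have hpsi : ∀ x : Fin n → F2E n, ψ x = ∑ j, x j * rhoE n j := by
    intro x
    conv_lhs => rw [pi_decomp n x]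
    rw [map_sum]
    exact Finset.sum_congr rfl fun j _ => by rw [map_smul, hψ, smul_eq_mul]
  have key2 : ∀ x ∈ LinearMap.ker ψ ⊔ Submodule.span (F2E n) {aElt n hn},
      ψ x = ((ψ x).coeff 1) • piRho n := by
    intro x hx
    rcases Submodule.mem_sup.mp hx with ⟨y, hy, z, hz, rfl⟩
    rcases Submodule.mem_span_singleton.mp hz with ⟨r, rfl⟩
    have h1 : ψ (y + r • aElt n hn) = augE n r • piRho n := by
      rw [map_add, LinearMap.mem_ker.mp hy, zero_add, map_smul, smul_eq_mul, psi_a,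
        mul_piRho]
    rw [h1, MonoidAlgebra.coeff_smul_apply, piRho_apply_one, smul_eq_mul, mul_one]
  -- finrank part
  have hres : (LinearMap.ker ψ ⊔ Submodule.span (F2E n) {aElt n hn}).restrictScalars (ZMod 2)
      = (LinearMap.ker ψ).restrictScalars (ZMod 2) ⊔
        Submodule.span (ZMod 2) {aElt n hn} := by
    apply le_antisymm
    · intro x hx
      rw [Submodule.restrictScalars_mem] at hx
      rcases Submodule.mem_sup.mp hx with ⟨y, hy, z, hz, rfl⟩
      rcases Submodule.mem_span_singleton.mp hz with ⟨r, rfl⟩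
      have h1 : y ∈ (LinearMap.ker ψ).restrictScalars (ZMod 2) ⊔
          Submodule.span (ZMod 2) {aElt n hn} :=
        Submodule.mem_sup_left ((Submodule.restrictScalars_mem _ _ _).mpr hy)
      have h2 : r • aElt n hn - (augE n r) • aElt n hn ∈ LinearMap.ker ψ := by
        rw [LinearMap.mem_ker, map_sub, map_smul, LinearMap.map_smul_of_tower, psi_a,
          smul_eq_mul, mul_piRho, sub_self]
      have h3 : r • aElt n hn - (augE n r) • aElt n hn ∈
          (LinearMap.ker ψ).restrictScalars (ZMod 2) ⊔
          Submodule.span (ZMod 2) {aElt n hn} :=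
        Submodule.mem_sup_left ((Submodule.restrictScalars_mem _ _ _).mpr h2)
      have h4 : (augE n r) • aElt n hn ∈ (LinearMap.ker ψ).restrictScalars (ZMod 2) ⊔
          Submodule.span (ZMod 2) {aElt n hn} :=
        Submodule.mem_sup_right
          (Submodule.smul_mem _ _ (Submodule.mem_span_singleton_self _))
      have heq : y + r • aElt n hn =
          (y + (r • aElt n hn - (augE n r) • aElt n hn)) + (augE n r) • aElt n hn := by
        abel
      rw [heq]
      exact Submodule.add_mem _ (Submodule.add_mem _ h1 h3) h4
    · refine sup_le ?_ ?_
      · intro x hx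
        rw [Submodule.restrictScalars_mem] at hx ⊢
        exact Submodule.mem_sup_left hx
      · rw [Submodule.span_le]
        intro x hx
        rcases Set.mem_singleton_iff.mp hx with rfl
        rw [SetLike.mem_coe, Submodule.restrictScalars_mem]
        exact Submodule.mem_sup_right (Submodule.mem_span_singleton_self _)
  have hinf : (LinearMap.ker ψ).restrictScalars (ZMod 2) ⊓
      Submodule.span (ZMod 2) {aElt n hn} = ⊥ := by
    rw [eq_bot_iff]
    intro x hx
    rcases Submodule.mem_inf.mp hx with ⟨hx1, hx2⟩
    rcases Submodule.mem_span_singleton.mp hx2 with ⟨c, rfl⟩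
    rcases (by decide : ∀ c : ZMod 2, c = 0 ∨ c = 1) c with rfl | rfl
    · rw [zero_smul]; exact Submodule.zero_mem ⊥
    · rw [one_smul] at hx1
      exact absurd ((Submodule.restrictScalars_mem _ _ _).mp hx1) haK
  have hrank : Module.finrank (ZMod 2)
      (LinearMap.ker ψ ⊔ Submodule.span (F2E n) {aElt n hn} : Submodule (F2E n) _) =
      Module.finrank (ZMod 2) (LinearMap.ker ψ) + 1 := by
    have e1 := ((Submodule.restrictScalarsEquiv (ZMod 2) (F2E n) (Fin n → F2E n)
      (LinearMap.ker ψ ⊔ Submodule.span (F2E n) {aElt n hn})).restrictScalars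
        (ZMod 2)).finrank_eq
    have e2 := ((Submodule.restrictScalarsEquiv (ZMod 2) (F2E n) (Fin n → F2E n)
      (LinearMap.ker ψ)).restrictScalars (ZMod 2)).finrank_eq
    rw [← e1, ← e2, hres]
    have hsum := Submodule.finrank_sup_add_finrank_inf_eq
      ((LinearMap.ker ψ).restrictScalars (ZMod 2)) (Submodule.span (ZMod 2) {aElt n hn})
    rw [hinf, finrank_bot, add_zero, finrank_span_singleton ha0] at hsum
    exact hsum
  refine ⟨haK, hrank, ?_⟩
  -- the map η
  refine ⟨{ toFun := fun x => (ψ x.val).coeff 1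
            map_add' := by
              intro x y
              show (ψ (x.val + y.val)).coeff 1 = _
              rw [map_add, MonoidAlgebra.coeff_add, Finsupp.add_apply]; rfl
            map_smul' := by
              intro r x
              have hc := key2 x.val x.2
              show (ψ (r • x.val)).coeff 1 = (augE n r * ((ψ x.val).coeff 1) : ZMod 2)
              rw [map_smul, smul_eq_mul]
              conv_lhs => rw [hc]
              rw [mul_smul_comm, mul_piRho, MonoidAlgebra.coeff_smul_apply, MonoidAlgebra.coeff_smul_apply,
                piRho_apply_one, smul_eq_mul, smul_eq_mul, mul_one, mul_comm] }, ?_, ?_, ?_, ?_⟩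
  · intro x hx
    show (ψ x.val).coeff 1 = 0
    rw [LinearMap.mem_ker.mp hx]
    rfl
  · show (ψ (aElt n hn)).coeff 1 = 1
    rw [psi_a, piRho_apply_one]
  · intro c
    rcases (by decide : ∀ t : ZMod 2, t = 0 ∨ t = 1) (show ZMod 2 from c) with h | h
    · refine ⟨0, ?_⟩
      show (ψ (0 : ↥(LinearMap.ker ψ ⊔ Submodule.span (F2E n) {aElt n hn})).val).coeff 1 = c
      rw [ZeroMemClass.coe_zero, map_zero]
      exact h.symm
    · refine ⟨⟨aElt n hn, Submodule.mem_sup_right (Submodule.mem_span_singleton_self _)⟩, ?_⟩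
      show (ψ (aElt n hn)).coeff 1 = c
      rw [psi_a, piRho_apply_one]
      exact h.symm
  · rintro ⟨s, hs⟩
    have h1 : (ψ (s 1).val).coeff 1 = 1 := by
      have := DFunLike.congr_fun hs (1 : TrivF2 n)
      rw [LinearMap.comp_apply, LinearMap.id_apply] at this
      exact this
    have h2 : ∀ i, rhoE n i • (s 1) = 0 := by
      intro i
      have hz : rhoE n i • (1 : TrivF2 n) = 0 := by
        show augE n (rhoE n i) * 1 = 0
        rw [aug_rho, zero_mul]
      rw [← map_smul, hz, map_zero]
    have h3 : ∀ i j, rhoE n i * ((s 1).val j) = 0 := by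
      intro i j
      have := congrArg (fun v : ↥(LinearMap.ker ψ ⊔ Submodule.span (F2E n) {aElt n hn}) =>
        v.val j) (h2 i)
      simpa using this
    have h4 : ∀ j, (s 1).val j = ((s 1).val j).coeff 1 • piRho n :=
      fun j => socle n _ (fun i => h3 i j)
    have h5 : ψ (s 1).val = 0 := by
      rw [hpsi]
      apply Finset.sum_eq_zero
      intro j _
      rw [h4 j, smul_mul_assoc, mul_comm (piRho n) (rhoE n j), rho_mul_piRho, smul_zero]
    rw [h5] at h1
    simp at h1
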